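/- Let X̄ ∈ ℝ^{m×n} have rank r with reduced SVD X̄ = P₊ Σ₊ Q₊ᵀ, and define Z̄ = [[P₊ Σ₊ P₊ᵀ, X̄],[X̄ᵀ, Q₊ Σ₊ Q₊ᵀ]] ∈ S^{m+n}. Then Z̄ is positive semidefinite of rank r, and among all pairs (U,V) with [[U, X̄],[X̄ᵀ, V]] ⪰ 0, the pair (P₊ Σ₊ P₊ᵀ, Q₊ Σ₊ Q₊ᵀ) is the unique minimizer of (1/2)(tr U + tr V). -/

import Mathlib

open Matrix

private lemma trace_tmul_nonneg {k l : Type*} [Fintype k] [Fintype l]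
    (C : Matrix k l ℝ) : 0 ≤ (Cᵀ * C).trace := by
  classical
  simp only [Matrix.trace, Matrix.diag_apply, Matrix.mul_apply, Matrix.transpose_apply]
  exact Finset.sum_nonneg fun j _ => Finset.sum_nonneg fun i _ => mul_self_nonneg _

private lemma eq_zero_of_trace_tmul {k l : Type*} [Fintype k] [Fintype l]
    (C : Matrix k l ℝ) (h : (Cᵀ * C).trace = 0) : C = 0 := by
  classical
  simp only [Matrix.trace, Matrix.diag_apply, Matrix.mul_apply, Matrix.transpose_apply] at h
  ext i j
  have h1 := (Finset.sum_eq_zero_iff_of_nonneg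
    (fun j _ => Finset.sum_nonneg fun i _ => mul_self_nonneg (C i j))).mp h j (Finset.mem_univ j)
  have h2 := (Finset.sum_eq_zero_iff_of_nonneg
    (fun i _ => mul_self_nonneg (C i j))).mp h1 i (Finset.mem_univ i)
  simpa using mul_self_eq_zero.mp h2

private lemma psd_exists_eq {k : Type*} [Fintype k] [DecidableEq k] {M : Matrix k k ℝ}
    (h : M.PosSemidef) : ∃ B : Matrix k k ℝ, M = Bᴴ * B := by
  open scoped MatrixOrder Matrix.Norms.L2Operator in
  obtain ⟨B, hB⟩ := CStarAlgebra.nonneg_iff_eq_star_mul_self.mp h.nonneg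
  exact ⟨B, hB⟩

private lemma psd_trace_nonneg {k : Type*} [Fintype k] [DecidableEq k] {M : Matrix k k ℝ}
    (h : M.PosSemidef) : 0 ≤ M.trace := by
  obtain ⟨B, rfl⟩ := psd_exists_eq h
  rw [Matrix.conjTranspose_eq_transpose_of_trivial]
  exact trace_tmul_nonneg B

private lemma psd_eq_zero_of_trace {k : Type*} [Fintype k] [DecidableEq k] {M : Matrix k k ℝ}
    (h : M.PosSemidef) (ht : M.trace = 0) : M = 0 := by
  obtain ⟨B, rfl⟩ := psd_exists_eq h
  rw [Matrix.conjTranspose_eq_transpose_of_trivial] at ht ⊢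
  rw [eq_zero_of_trace_tmul B ht]
  simp

private lemma psd_mul_eq_zero {k l : Type*} [Fintype k] [DecidableEq k] [Fintype l]
    {M : Matrix k k ℝ} (h : M.PosSemidef) (J : Matrix k l ℝ) (hJ : Jᵀ * M * J = 0) :
    M * J = 0 := by
  obtain ⟨B, rfl⟩ := psd_exists_eq h
  rw [Matrix.conjTranspose_eq_transpose_of_trivial] at hJ ⊢
  have hBJ : B * J = 0 := by
    apply eq_zero_of_trace_tmul
    have : (B * J)ᵀ * (B * J) = Jᵀ * (Bᵀ * B) * J := by
      rw [Matrix.transpose_mul]; simp only [Matrix.mul_assoc]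
    rw [this, hJ, Matrix.trace_zero]
  calc Bᵀ * B * J = Bᵀ * (B * J) := by rw [Matrix.mul_assoc]
  _ = 0 := by rw [hBJ, Matrix.mul_zero]

/-- the matrix `Z̄ = [[PΣPᵀ, X̄],[X̄ᵀ, QΣQᵀ]]` built from a reduced SVD
`X̄ = PΣQᵀ` is positive semidefinite of rank `r`, and `(PΣPᵀ, QΣQᵀ)` is the unique
minimizer of `(1/2)(tr U + tr V)` over symmetric pairs with `[[U, X̄],[X̄ᵀ, V]] ⪰ 0`. -/
theorem stmt10 (m n r : ℕ)
    (P : Matrix (Fin m) (Fin r) ℝ) (Q : Matrix (Fin n) (Fin r) ℝ)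
    (σ : Fin r → ℝ) (hσ : ∀ i, 0 < σ i)
    (hP : Pᵀ * P = 1) (hQ : Qᵀ * Q = 1)
    (Xb : Matrix (Fin m) (Fin n) ℝ)
    (hX : Xb = P * Matrix.diagonal σ * Qᵀ) :
    (Matrix.fromBlocks (P * Matrix.diagonal σ * Pᵀ) Xb Xbᵀ
        (Q * Matrix.diagonal σ * Qᵀ)).PosSemidef ∧
    (Matrix.fromBlocks (P * Matrix.diagonal σ * Pᵀ) Xb Xbᵀ
        (Q * Matrix.diagonal σ * Qᵀ)).rank = r ∧
    ∀ (U : Matrix (Fin m) (Fin m) ℝ) (V : Matrix (Fin n) (Fin n) ℝ),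
      U.IsSymm → V.IsSymm → (Matrix.fromBlocks U Xb Xbᵀ V).PosSemidef →
      ((1/2) * ((P * Matrix.diagonal σ * Pᵀ).trace + (Q * Matrix.diagonal σ * Qᵀ).trace) ≤
          (1/2) * (U.trace + V.trace) ∧
        ((1/2) * (U.trace + V.trace) =
            (1/2) * ((P * Matrix.diagonal σ * Pᵀ).trace + (Q * Matrix.diagonal σ * Qᵀ).trace) →
          U = P * Matrix.diagonal σ * Pᵀ ∧ V = Q * Matrix.diagonal σ * Qᵀ)) := by
  set D := Matrix.diagonal σ with hD
  have hDpsd : D.PosSemidef := Matrix.posSemidef_diagonal_iff.mpr fun i => (hσ i).le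
  set W : Matrix (Fin m ⊕ Fin n) (Fin r) ℝ := Matrix.fromRows P Q with hW
  have hWt : Wᵀ = Matrix.fromCols Pᵀ Qᵀ := Matrix.transpose_fromRows P Q
  have hZeq : Matrix.fromBlocks (P * D * Pᵀ) Xb Xbᵀ (Q * D * Qᵀ) = W * D * Wᵀ := by
    rw [hX, hWt, hW, Matrix.fromRows_mul, Matrix.fromRows_mul_fromCols,
      Matrix.transpose_mul, Matrix.transpose_mul, Matrix.transpose_transpose,
      Matrix.diagonal_transpose]
    simp only [Matrix.mul_assoc, ← hD]
  have hZpsd : (Matrix.fromBlocks (P * D * Pᵀ) Xb Xbᵀ (Q * D * Qᵀ)).PosSemidef := by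
    rw [hZeq]
    have := hDpsd.mul_mul_conjTranspose_same W
    rwa [Matrix.conjTranspose_eq_transpose_of_trivial] at this
  refine ⟨hZpsd, ?_, ?_⟩
  · -- rank
    have hWW : Wᵀ * W = (2:ℝ) • 1 := by
      rw [hWt, hW, Matrix.fromCols_mul_fromRows, hP, hQ, two_smul]
    have h4 : Wᵀ * (W * D * Wᵀ) * W = Matrix.diagonal (fun i => (4:ℝ) * σ i) := by
      have e1 : Wᵀ * (W * D * Wᵀ) * W = (Wᵀ * W) * D * (Wᵀ * W) := by
        simp only [Matrix.mul_assoc]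
      rw [e1, hWW, Matrix.smul_mul, Matrix.one_mul, Matrix.smul_mul, Matrix.mul_smul,
        smul_smul, Matrix.mul_one, hD, ← Matrix.diagonal_smul]
      have e2 : ((2:ℝ) * 2) • σ = fun i => (4:ℝ) * σ i := by
        funext i
        show (2:ℝ) * 2 * σ i = 4 * σ i
        ring
      rw [e2]
    have hcard : Fintype.card {i : Fin r // (fun i => (4:ℝ) * σ i) i ≠ 0} = r := by
      rw [Fintype.card_congr (Equiv.subtypeUnivEquiv
        fun i => (mul_pos (by norm_num) (hσ i)).ne')]
      exact Fintype.card_fin r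
    have hle : (W * D * Wᵀ).rank ≤ r := by
      calc (W * D * Wᵀ).rank ≤ (W * D).rank := Matrix.rank_mul_le_left _ _
      _ ≤ D.rank := Matrix.rank_mul_le_right _ _
      _ ≤ Fintype.card (Fin r) := Matrix.rank_le_card_width D
      _ = r := Fintype.card_fin r
    have hge : r ≤ (W * D * Wᵀ).rank := by
      have h1 : (Wᵀ * (W * D * Wᵀ) * W).rank ≤ (W * D * Wᵀ).rank :=
        (Matrix.rank_mul_le_left _ _).trans (Matrix.rank_mul_le_right _ _)
      rw [h4, Matrix.rank_diagonal, hcard] at h1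
      exact h1
    rw [hZeq]
    exact le_antisymm hle hge
  · -- minimization
    intro U V hUs hVs hZ'
    set A := Pᵀ * U * P with hA
    set B := Qᵀ * V * Q with hB
    have hUpsd : U.PosSemidef := by
      have h := hZ'.submatrix (Sum.inl : Fin m → Fin m ⊕ Fin n)
      have e : (Matrix.fromBlocks U Xb Xbᵀ V).submatrix (Sum.inl : Fin m → Fin m ⊕ Fin n)
          Sum.inl = U := by
        ext i j; simp [Matrix.submatrix_apply, Matrix.fromBlocks_apply₁₁]
      rwa [e] at h
    have hVpsd : V.PosSemidef := by
      have h := hZ'.submatrix (Sum.inr : Fin n → Fin m ⊕ Fin n)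
      have e : (Matrix.fromBlocks U Xb Xbᵀ V).submatrix (Sum.inr : Fin n → Fin m ⊕ Fin n)
          Sum.inr = V := by
        ext i j; simp [Matrix.submatrix_apply, Matrix.fromBlocks_apply₂₂]
      rwa [e] at h
    set E : Matrix (Fin m) (Fin m) ℝ := 1 - P * Pᵀ with hE
    set F : Matrix (Fin n) (Fin n) ℝ := 1 - Q * Qᵀ with hF
    have hEt : Eᵀ = E := by
      rw [hE, Matrix.transpose_sub, Matrix.transpose_one, Matrix.transpose_mul,
        Matrix.transpose_transpose]
    have hFt : Fᵀ = F := by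
      rw [hF, Matrix.transpose_sub, Matrix.transpose_one, Matrix.transpose_mul,
        Matrix.transpose_transpose]
    have hEE : E * E = E := by
      have hPPP : P * Pᵀ * (P * Pᵀ) = P * Pᵀ := by
        have e : P * Pᵀ * (P * Pᵀ) = P * (Pᵀ * P) * Pᵀ := by simp only [Matrix.mul_assoc]
        rw [e, hP, Matrix.mul_one]
      rw [hE]
      simp only [Matrix.sub_mul, Matrix.mul_sub, Matrix.one_mul, Matrix.mul_one, hPPP]
      abel
    have hFF : F * F = F := by
      have hQQQ : Q * Qᵀ * (Q * Qᵀ) = Q * Qᵀ := by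
        have e : Q * Qᵀ * (Q * Qᵀ) = Q * (Qᵀ * Q) * Qᵀ := by simp only [Matrix.mul_assoc]
        rw [e, hQ, Matrix.mul_one]
      rw [hF]
      simp only [Matrix.sub_mul, Matrix.mul_sub, Matrix.one_mul, Matrix.mul_one, hQQQ]
      abel
    -- trace decomposition
    have htrA : A.trace = (P * Pᵀ * U).trace := by
      rw [hA, Matrix.trace_mul_comm, ← Matrix.mul_assoc]
    have htrEUE : (E * U * E).trace = U.trace - A.trace := by
      have e : (E * U * E).trace = (E * U).trace := by
        rw [Matrix.trace_mul_comm, ← Matrix.mul_assoc, hEE]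
      rw [e, hE, Matrix.sub_mul, Matrix.one_mul, Matrix.trace_sub, htrA]
    have htrB : B.trace = (Q * Qᵀ * V).trace := by
      rw [hB, Matrix.trace_mul_comm, ← Matrix.mul_assoc]
    have htrFVF : (F * V * F).trace = V.trace - B.trace := by
      have e : (F * V * F).trace = (F * V).trace := by
        rw [Matrix.trace_mul_comm, ← Matrix.mul_assoc, hFF]
      rw [e, hF, Matrix.sub_mul, Matrix.one_mul, Matrix.trace_sub, htrB]
    have hEUEpsd : (E * U * E).PosSemidef := by
      have h := hUpsd.conjTranspose_mul_mul_same E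
      rwa [Matrix.conjTranspose_eq_transpose_of_trivial, hEt] at h
    have hFVFpsd : (F * V * F).PosSemidef := by
      have h := hVpsd.conjTranspose_mul_mul_same F
      rwa [Matrix.conjTranspose_eq_transpose_of_trivial, hFt] at h
    have hEUEnn : 0 ≤ (E * U * E).trace := psd_trace_nonneg hEUEpsd
    have hFVFnn : 0 ≤ (F * V * F).trace := psd_trace_nonneg hFVFpsd
    -- the congruence matrix
    set W2 : Matrix (Fin m ⊕ Fin n) (Fin r ⊕ Fin r) ℝ := Matrix.fromBlocks P 0 0 Q with hW2
    have hW2t : W2ᵀ = Matrix.fromBlocks Pᵀ 0 0 Qᵀ := by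
      rw [hW2, Matrix.fromBlocks_transpose, Matrix.transpose_zero, Matrix.transpose_zero]
    have hPXQ : Pᵀ * Xb * Q = D := by
      rw [hX]
      have e : Pᵀ * (P * D * Qᵀ) * Q = (Pᵀ * P) * D * (Qᵀ * Q) := by
        simp only [Matrix.mul_assoc]
      rw [e, hP, hQ, Matrix.one_mul, Matrix.mul_one]
    have hQXP : Qᵀ * Xbᵀ * P = D := by
      have e : Qᵀ * Xbᵀ * P = (Pᵀ * Xb * Q)ᵀ := by
        rw [Matrix.transpose_mul, Matrix.transpose_mul, Matrix.transpose_transpose,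
          ← Matrix.mul_assoc]
      rw [e, hPXQ, hD, Matrix.diagonal_transpose]
    have hM' : W2ᵀ * Matrix.fromBlocks U Xb Xbᵀ V * W2 = Matrix.fromBlocks A D D B := by
      rw [hW2t, hW2, Matrix.fromBlocks_multiply, Matrix.fromBlocks_multiply]
      simp only [Matrix.zero_mul, Matrix.mul_zero, add_zero, zero_add]
      rw [hPXQ, hQXP, ← hA, ← hB]
    have hM'psd : (Matrix.fromBlocks A D D B).PosSemidef := by
      rw [← hM']
      have h := hZ'.conjTranspose_mul_mul_same W2
      rwa [Matrix.conjTranspose_eq_transpose_of_trivial] at h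
    set J : Matrix (Fin r ⊕ Fin r) (Fin r) ℝ :=
      Matrix.fromRows (1 : Matrix (Fin r) (Fin r) ℝ) (-1) with hJ
    have hJt : Jᵀ = Matrix.fromCols (1 : Matrix (Fin r) (Fin r) ℝ) (-1) := by
      rw [hJ, Matrix.transpose_fromRows, Matrix.transpose_one, Matrix.transpose_neg,
        Matrix.transpose_one]
    have hK : Jᵀ * Matrix.fromBlocks A D D B * J = A + B - (2:ℝ) • D := by
      rw [hJt, hJ, Matrix.fromCols_mul_fromBlocks, Matrix.fromCols_mul_fromRows]
      simp only [Matrix.one_mul, Matrix.mul_one, Matrix.neg_mul, Matrix.mul_neg,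
        neg_neg, two_smul]
      abel
    have hKpsd : (A + B - (2:ℝ) • D).PosSemidef := by
      rw [← hK]
      have h := hM'psd.conjTranspose_mul_mul_same J
      rwa [Matrix.conjTranspose_eq_transpose_of_trivial] at h
    have htrK : (A + B - (2:ℝ) • D).trace = A.trace + B.trace - 2 * D.trace := by
      rw [Matrix.trace_sub, Matrix.trace_add, Matrix.trace_smul]
      simp
    have hKnn : 0 ≤ A.trace + B.trace - 2 * D.trace := by
      have h := psd_trace_nonneg hKpsd
      rwa [htrK] at h
    have htrS : (P * D * Pᵀ).trace = D.trace := by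
      rw [Matrix.trace_mul_comm, ← Matrix.mul_assoc, hP, Matrix.one_mul]
    have htrT : (Q * D * Qᵀ).trace = D.trace := by
      rw [Matrix.trace_mul_comm, ← Matrix.mul_assoc, hQ, Matrix.one_mul]
    have hUtr : U.trace = A.trace + (E * U * E).trace := by rw [htrEUE]; ring
    have hVtr : V.trace = B.trace + (F * V * F).trace := by rw [htrFVF]; ring
    constructor
    · rw [htrS, htrT]
      linarith [hEUEnn, hFVFnn, hKnn, hUtr, hVtr]
    · intro heq
      rw [htrS, htrT] at heq
      have h1 : (E * U * E).trace = 0 := by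
        linarith [hUtr, hVtr, hKnn, hFVFnn, hEUEnn]
      have h2 : (F * V * F).trace = 0 := by
        linarith [hUtr, hVtr, hKnn, hFVFnn, hEUEnn]
      have h3 : A.trace + B.trace - 2 * D.trace = 0 := by
        linarith [hUtr, hVtr, hKnn, hFVFnn, hEUEnn]
      -- K = 0
      have hK0 : A + B - (2:ℝ) • D = 0 := psd_eq_zero_of_trace hKpsd (by rw [htrK]; exact h3)
      -- U * E = 0 and E * U = 0
      have hEUE0 : E * U * E = 0 := psd_eq_zero_of_trace hEUEpsd h1
      have hUE : U * E = 0 := psd_mul_eq_zero hUpsd E (by rw [hEt]; exact hEUE0)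
      have hEU : E * U = 0 := by
        have h := congrArg Matrix.transpose hUE
        rwa [Matrix.transpose_mul, hEt, hUs.eq, Matrix.transpose_zero] at h
      have hFVF0 : F * V * F = 0 := psd_eq_zero_of_trace hFVFpsd h2
      have hVF : V * F = 0 := psd_mul_eq_zero hVpsd F (by rw [hFt]; exact hFVF0)
      have hFV : F * V = 0 := by
        have h := congrArg Matrix.transpose hVF
        rwa [Matrix.transpose_mul, hFt, hVs.eq, Matrix.transpose_zero] at h
      -- U = P * A * Pᵀ
      have hUP : U = P * Pᵀ * U := by
        rw [hE, Matrix.sub_mul, Matrix.one_mul] at hEU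
        exact sub_eq_zero.mp hEU
      have hUP2 : U = U * (P * Pᵀ) := by
        rw [hE, Matrix.mul_sub, Matrix.mul_one] at hUE
        exact sub_eq_zero.mp hUE
      have hUPA : U = P * A * Pᵀ := by
        calc U = P * Pᵀ * U := hUP
        _ = P * Pᵀ * (U * (P * Pᵀ)) := by rw [← hUP2]
        _ = P * A * Pᵀ := by rw [hA]; simp only [Matrix.mul_assoc]
      have hVQ : V = Q * Qᵀ * V := by
        rw [hF, Matrix.sub_mul, Matrix.one_mul] at hFV
        exact sub_eq_zero.mp hFV
      have hVQ2 : V = V * (Q * Qᵀ) := by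
        rw [hF, Matrix.mul_sub, Matrix.mul_one] at hVF
        exact sub_eq_zero.mp hVF
      have hVQB : V = Q * B * Qᵀ := by
        calc V = Q * Qᵀ * V := hVQ
        _ = Q * Qᵀ * (V * (Q * Qᵀ)) := by rw [← hVQ2]
        _ = Q * B * Qᵀ := by rw [hB]; simp only [Matrix.mul_assoc]
      -- A = D and B = D
      have hMJ : Matrix.fromBlocks A D D B * J = 0 :=
        psd_mul_eq_zero hM'psd J (by rw [hK, hK0])
      rw [hJ, Matrix.fromBlocks_mul_fromRows] at hMJ
      have hAD : A = D := by
        have hsub : A - D = 0 := by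
          ext i j
          have h := congrFun (congrFun hMJ (Sum.inl i)) j
          simpa [Matrix.fromRows_apply_inl, Matrix.sub_apply, sub_eq_add_neg, Matrix.mul_neg, Matrix.mul_one] using h
        exact sub_eq_zero.mp hsub
      have hBD : B = D := by
        have hsub : D - B = 0 := by
          ext i j
          have h := congrFun (congrFun hMJ (Sum.inr i)) j
          simpa [Matrix.fromRows_apply_inr, Matrix.sub_apply, sub_eq_add_neg, Matrix.mul_neg, Matrix.mul_one] using h
        exact (sub_eq_zero.mp hsub).symm
      exact ⟨by rw [hUPA, hAD], by rw [hVQB, hBD]⟩
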